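/- Under assumptions (A1)–(A4) with μ > 2, for every (f1,f2) ∈ 𝒦 and every η ∈ [s0,r0] one has (K1m·E1inf/(2·L1M·(μ+ν−1)²))·(s0^(−(μ+ν−1)) − η^(−(μ+ν−1)))² ≤ G1(η; f1,f2) ≤ G1sup, where G1sup = H1sup/(L1m·(μ+ν−1)·s0^(μ+ν−1)), H1sup = K1M/(E1inf·(μ+ν−1)·s0^(μ+ν−1)), E1inf = exp(−[a·N1M/(L1m·(μ−1)·s0^(2μ−2)) + D1·K1M/(H_inf·L1m·(2μ+ν−1)·s0^(2μ+ν−1))]) and H_inf = (K1m/(μ+ν−1))·(s0^(−(μ+ν−1)) − r0^(−(μ+ν−1))). -/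

import Mathlib

open MeasureTheory Filter Topology

noncomputable section

/-- The bundle of fixed constants of the problem. -/
structure Cst where
  nu : ℝ
  mu : ℝ
  a : ℝ
  D1 : ℝ
  D2 : ℝ
  Q : ℝ
  D1s : ℝ
  D2s : ℝ
  L1m : ℝ
  L1M : ℝ
  N1m : ℝ
  N1M : ℝ
  K1m : ℝ
  K1M : ℝ
  L2m : ℝ
  L2M : ℝ
  N2m : ℝ
  N2M : ℝ
  K2m : ℝ
  K2M : ℝ
  Lt1 : ℝ
  Nt1 : ℝ
  Kt1 : ℝ
  Lt2 : ℝ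
  Nt2 : ℝ
  Kt2 : ℝ

/-- The space `C[s0,r0]`, modeled as real functions continuous on `[s0,r0]`. -/
def C1 (s0 r0 : ℝ) : Set (ℝ → ℝ) := {f | ContinuousOn f (Set.Icc s0 r0)}

/-- The set `ℳ ⊆ C_b[r0,∞)`: bounded continuous functions on `[r0,∞)` with
`f(r0) = 0` and `f(η) → -1` as `η → ∞`. -/
def Mset (r0 : ℝ) : Set (ℝ → ℝ) :=
  {f | ContinuousOn f (Set.Ici r0) ∧ (∃ C, ∀ x ∈ Set.Ici r0, |f x| ≤ C) ∧
    f r0 = 0 ∧ Tendsto f atTop (𝓝 (-1))}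

/-- Sup norm of `f` over the set `S`. -/
def supOn (S : Set ℝ) (f : ℝ → ℝ) : ℝ := ⨆ x : S, |f x.1|

/-- Norm of the difference of two pairs in `𝒦 = C[s0,r0] × ℳ`. -/
def pairNorm (s0 r0 : ℝ) (f1 f2 g1 g2 : ℝ → ℝ) : ℝ :=
  max (supOn (Set.Icc s0 r0) (f1 - g1)) (supOn (Set.Ici r0) (f2 - g2))

/-- Positivity assumptions on all the fixed constants and on `s0, r0`. -/
def PosC (c : Cst) (s0 r0 : ℝ) : Prop :=
  0 < c.a ∧ 0 < c.nu ∧ c.nu < 1 ∧ 2 < c.mu ∧ 0 < s0 ∧ s0 < r0 ∧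
  0 < c.D1 ∧ 0 < c.D2 ∧ 0 < c.Q ∧ 0 < c.D1s ∧ 0 < c.D2s ∧
  0 < c.L1m ∧ 0 < c.L1M ∧ 0 < c.N1m ∧ 0 < c.N1M ∧ 0 < c.K1m ∧ 0 < c.K1M ∧
  0 < c.L2m ∧ 0 < c.L2M ∧ 0 < c.N2m ∧ 0 < c.N2M ∧ 0 < c.K2m ∧ 0 < c.K2M ∧
  0 < c.Lt1 ∧ 0 < c.Nt1 ∧ 0 < c.Kt1 ∧ 0 < c.Lt2 ∧ 0 < c.Nt2 ∧ 0 < c.Kt2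

/-- Positivity assumptions on all the fixed constants (no `s0, r0`). -/
def PosCst (c : Cst) : Prop :=
  0 < c.a ∧ 0 < c.nu ∧ c.nu < 1 ∧ 2 < c.mu ∧
  0 < c.D1 ∧ 0 < c.D2 ∧ 0 < c.Q ∧ 0 < c.D1s ∧ 0 < c.D2s ∧
  0 < c.L1m ∧ 0 < c.L1M ∧ 0 < c.N1m ∧ 0 < c.N1M ∧ 0 < c.K1m ∧ 0 < c.K1M ∧
  0 < c.L2m ∧ 0 < c.L2M ∧ 0 < c.N2m ∧ 0 < c.N2M ∧ 0 < c.K2m ∧ 0 < c.K2M ∧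
  0 < c.Lt1 ∧ 0 < c.Nt1 ∧ 0 < c.Kt1 ∧ 0 < c.Lt2 ∧ 0 < c.Nt2 ∧ 0 < c.Kt2

/-- Assumptions (A1)–(A4): continuity of the images of `L, N, K`, the two-sided
bounds and the Lipschitz bounds. -/
def Assum (c : Cst) (s0 r0 : ℝ) (L1 N1 K1 L2 N2 K2 : (ℝ → ℝ) → ℝ → ℝ) : Prop :=
  (∀ f1 ∈ C1 s0 r0,
    ContinuousOn (L1 f1) (Set.Icc s0 r0) ∧ ContinuousOn (N1 f1) (Set.Icc s0 r0) ∧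
      ContinuousOn (K1 f1) (Set.Icc s0 r0)) ∧
  (∀ f2 ∈ Mset r0,
    ContinuousOn (L2 f2) (Set.Ici r0) ∧ ContinuousOn (N2 f2) (Set.Ici r0) ∧
      ContinuousOn (K2 f2) (Set.Ici r0)) ∧
  (∀ f1 ∈ C1 s0 r0, ∀ η ∈ Set.Icc s0 r0,
    c.L1m * η ^ c.mu ≤ L1 f1 η ∧ L1 f1 η ≤ c.L1M * η ^ c.mu ∧
    c.N1m * η ^ (-c.mu) ≤ N1 f1 η ∧ N1 f1 η ≤ c.N1M * η ^ (-c.mu) ∧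
    c.K1m * η ^ (-c.mu) ≤ K1 f1 η ∧ K1 f1 η ≤ c.K1M * η ^ (-c.mu)) ∧
  (∀ f2 ∈ Mset r0, ∀ η ∈ Set.Ici r0,
    c.L2m * η ^ c.mu ≤ L2 f2 η ∧ L2 f2 η ≤ c.L2M * η ^ c.mu ∧
    c.N2m * η ^ (-c.mu) ≤ N2 f2 η ∧ N2 f2 η ≤ c.N2M * η ^ (-c.mu) ∧
    c.K2m * η ^ (-c.mu) ≤ K2 f2 η ∧ K2 f2 η ≤ c.K2M * η ^ (-c.mu)) ∧
  (∀ f1 ∈ C1 s0 r0, ∀ g1 ∈ C1 s0 r0, ∀ η ∈ Set.Icc s0 r0,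
    |L1 f1 η - L1 g1 η| ≤ c.Lt1 * supOn (Set.Icc s0 r0) (f1 - g1) ∧
    |N1 f1 η - N1 g1 η| ≤ c.Nt1 * supOn (Set.Icc s0 r0) (f1 - g1) ∧
    |K1 f1 η - K1 g1 η| ≤ c.Kt1 * η ^ (-c.mu) * supOn (Set.Icc s0 r0) (f1 - g1)) ∧
  (∀ f2 ∈ Mset r0, ∀ g2 ∈ Mset r0, ∀ η ∈ Set.Ici r0,
    |L2 f2 η - L2 g2 η| ≤ c.Lt2 * supOn (Set.Ici r0) (f2 - g2) ∧
    |N2 f2 η - N2 g2 η| ≤ c.Nt2 * supOn (Set.Ici r0) (f2 - g2) ∧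
    |K2 f2 η - K2 g2 η| ≤ c.Kt2 * η ^ (-c.mu) * supOn (Set.Ici r0) (f2 - g2))

/-- `H(f1,f2) = ∫_{s0}^{r0} K(f1)(v)/v^ν dv + ∫_{r0}^{∞} K(f2)(v)/v^ν dv`. -/
def Hf (c : Cst) (s0 r0 : ℝ) (L1 N1 K1 L2 N2 K2 : (ℝ → ℝ) → ℝ → ℝ) (f1 f2 : ℝ → ℝ) : ℝ :=
  (∫ v in s0..r0, K1 f1 v / v ^ c.nu) + ∫ v in Set.Ioi r0, K2 f2 v / v ^ c.nu

/-- `E1(η; f1,f2)`. -/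
def E1f (c : Cst) (s0 r0 : ℝ) (L1 N1 K1 L2 N2 K2 : (ℝ → ℝ) → ℝ → ℝ) (f1 f2 : ℝ → ℝ)
    (η : ℝ) : ℝ :=
  Real.exp (-(∫ v in s0..η,
    (2 * c.a * v * (N1 f1 v / L1 f1 v)
      + c.D1 / Hf c s0 r0 L1 N1 K1 L2 N2 K2 f1 f2 * (K1 f1 v / (L1 f1 v * v ^ c.nu)))))

/-- `Φ1(η; f1,f2)`. -/
def Phi1f (c : Cst) (s0 r0 : ℝ) (L1 N1 K1 L2 N2 K2 : (ℝ → ℝ) → ℝ → ℝ) (f1 f2 : ℝ → ℝ)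
    (η : ℝ) : ℝ :=
  ∫ v in s0..η, E1f c s0 r0 L1 N1 K1 L2 N2 K2 f1 f2 v / (L1 f1 v * v ^ c.nu)

/-- `H1(η; f1,f2)`. -/
def H1f (c : Cst) (s0 r0 : ℝ) (L1 N1 K1 L2 N2 K2 : (ℝ → ℝ) → ℝ → ℝ) (f1 f2 : ℝ → ℝ)
    (η : ℝ) : ℝ :=
  ∫ v in s0..η, K1 f1 v / (v ^ c.nu * E1f c s0 r0 L1 N1 K1 L2 N2 K2 f1 f2 v)

/-- `G1(η; f1,f2)`. -/
def G1f (c : Cst) (s0 r0 : ℝ) (L1 N1 K1 L2 N2 K2 : (ℝ → ℝ) → ℝ → ℝ) (f1 f2 : ℝ → ℝ)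
    (η : ℝ) : ℝ :=
  ∫ v in s0..η, E1f c s0 r0 L1 N1 K1 L2 N2 K2 f1 f2 v
    * H1f c s0 r0 L1 N1 K1 L2 N2 K2 f1 f2 v / (L1 f1 v * v ^ c.nu)

/-- `V1(f1,f2)(η)`. -/
def V1f (c : Cst) (s0 r0 : ℝ) (L1 N1 K1 L2 N2 K2 : (ℝ → ℝ) → ℝ → ℝ) (f1 f2 : ℝ → ℝ)
    (η : ℝ) : ℝ :=
  s0 ^ c.nu * c.Q * Real.exp (-s0 ^ 2)
      * (Phi1f c s0 r0 L1 N1 K1 L2 N2 K2 f1 f2 r0 - Phi1f c s0 r0 L1 N1 K1 L2 N2 K2 f1 f2 η)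
    + c.D1s / Hf c s0 r0 L1 N1 K1 L2 N2 K2 f1 f2 ^ 2
      * (G1f c s0 r0 L1 N1 K1 L2 N2 K2 f1 f2 r0 - G1f c s0 r0 L1 N1 K1 L2 N2 K2 f1 f2 η)

/-- `E2(η; f1,f2)`. -/
def E2f (c : Cst) (s0 r0 : ℝ) (L1 N1 K1 L2 N2 K2 : (ℝ → ℝ) → ℝ → ℝ) (f1 f2 : ℝ → ℝ)
    (η : ℝ) : ℝ :=
  Real.exp (-(∫ v in r0..η,
    (2 * c.a * v * (N2 f2 v / L2 f2 v)
      + c.D2 / Hf c s0 r0 L1 N1 K1 L2 N2 K2 f1 f2 * (K2 f2 v / (L2 f2 v * v ^ c.nu)))))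

/-- `Φ2(η; f1,f2)`. -/
def Phi2f (c : Cst) (s0 r0 : ℝ) (L1 N1 K1 L2 N2 K2 : (ℝ → ℝ) → ℝ → ℝ) (f1 f2 : ℝ → ℝ)
    (η : ℝ) : ℝ :=
  ∫ v in r0..η, E2f c s0 r0 L1 N1 K1 L2 N2 K2 f1 f2 v / (L2 f2 v * v ^ c.nu)

/-- `Φ2(∞; f1,f2)`. -/
def Phi2I (c : Cst) (s0 r0 : ℝ) (L1 N1 K1 L2 N2 K2 : (ℝ → ℝ) → ℝ → ℝ) (f1 f2 : ℝ → ℝ) : ℝ :=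
  ∫ v in Set.Ioi r0, E2f c s0 r0 L1 N1 K1 L2 N2 K2 f1 f2 v / (L2 f2 v * v ^ c.nu)

/-- `H2(η; f1,f2)`. -/
def H2f (c : Cst) (s0 r0 : ℝ) (L1 N1 K1 L2 N2 K2 : (ℝ → ℝ) → ℝ → ℝ) (f1 f2 : ℝ → ℝ)
    (η : ℝ) : ℝ :=
  ∫ v in r0..η, K2 f2 v / (v ^ c.nu * E2f c s0 r0 L1 N1 K1 L2 N2 K2 f1 f2 v)

/-- `G2(η; f1,f2)`. -/
def G2f (c : Cst) (s0 r0 : ℝ) (L1 N1 K1 L2 N2 K2 : (ℝ → ℝ) → ℝ → ℝ) (f1 f2 : ℝ → ℝ)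
    (η : ℝ) : ℝ :=
  ∫ v in r0..η, E2f c s0 r0 L1 N1 K1 L2 N2 K2 f1 f2 v
    * H2f c s0 r0 L1 N1 K1 L2 N2 K2 f1 f2 v / (L2 f2 v * v ^ c.nu)

/-- `G2(∞; f1,f2) = lim_{η→∞} G2(η; f1,f2)`. -/
def G2I (c : Cst) (s0 r0 : ℝ) (L1 N1 K1 L2 N2 K2 : (ℝ → ℝ) → ℝ → ℝ) (f1 f2 : ℝ → ℝ) : ℝ :=
  limUnder atTop (G2f c s0 r0 L1 N1 K1 L2 N2 K2 f1 f2)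

/-- `V2(f1,f2)(η)`. -/
def V2f (c : Cst) (s0 r0 : ℝ) (L1 N1 K1 L2 N2 K2 : (ℝ → ℝ) → ℝ → ℝ) (f1 f2 : ℝ → ℝ)
    (η : ℝ) : ℝ :=
  (c.D2s / Hf c s0 r0 L1 N1 K1 L2 N2 K2 f1 f2 ^ 2 * G2I c s0 r0 L1 N1 K1 L2 N2 K2 f1 f2 - 1)
      * (Phi2f c s0 r0 L1 N1 K1 L2 N2 K2 f1 f2 η / Phi2I c s0 r0 L1 N1 K1 L2 N2 K2 f1 f2)
    - c.D2s / Hf c s0 r0 L1 N1 K1 L2 N2 K2 f1 f2 ^ 2 * G2f c s0 r0 L1 N1 K1 L2 N2 K2 f1 f2 η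

/-! Constants appearing in the estimates. -/

def Hinf (c : Cst) (s0 r0 : ℝ) : ℝ :=
  c.K1m / (c.mu + c.nu - 1) * (s0 ^ (-(c.mu + c.nu - 1)) - r0 ^ (-(c.mu + c.nu - 1)))

def Hsup (c : Cst) (s0 r0 : ℝ) : ℝ :=
  (c.K1M * s0 ^ (-(c.mu + c.nu - 1)) + c.K2M * r0 ^ (-(c.mu + c.nu - 1))) / (c.mu + c.nu - 1)

def Htil (c : Cst) (s0 r0 : ℝ) : ℝ :=
  (c.Kt1 * s0 ^ (-(c.mu + c.nu - 1)) + c.Kt2 * r0 ^ (-(c.mu + c.nu - 1))) / (c.mu + c.nu - 1)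

/-- Limit of `Hinf` as `r0 → ∞`. -/
def HinfI (c : Cst) (s0 : ℝ) : ℝ := c.K1m / (c.mu + c.nu - 1) * s0 ^ (-(c.mu + c.nu - 1))

/-- Limit of `Hsup` as `r0 → ∞`. -/
def HsupI (c : Cst) (s0 : ℝ) : ℝ := c.K1M * s0 ^ (-(c.mu + c.nu - 1)) / (c.mu + c.nu - 1)

/-- Limit of `Htil` as `r0 → ∞`. -/
def HtilI (c : Cst) (s0 : ℝ) : ℝ := c.Kt1 * s0 ^ (-(c.mu + c.nu - 1)) / (c.mu + c.nu - 1)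

/-- `E1inf` as a function of the value `h` of `Hinf`. -/
def E1infG (c : Cst) (s0 h : ℝ) : ℝ :=
  Real.exp (-(c.a * c.N1M / (c.L1m * (c.mu - 1) * s0 ^ (2 * c.mu - 2))
    + c.D1 * c.K1M / (h * c.L1m * (2 * c.mu + c.nu - 1) * s0 ^ (2 * c.mu + c.nu - 1))))

/-- `Ẽ1` as a function of the values `h` of `Hinf` and `ht` of `Htil`. -/
def E1tilG (c : Cst) (s0 h ht : ℝ) : ℝ :=
  2 * c.a * (c.Nt1 / (c.L1m * (c.mu - 2) * s0 ^ (c.mu - 2))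
      + c.N1M * c.Lt1 / (c.L1m ^ 2 * (3 * c.mu - 2) * s0 ^ (3 * c.mu - 2)))
    + c.D1 * (c.Kt1 / (h * c.L1m * (2 * c.mu + c.nu - 1) * s0 ^ (2 * c.mu + c.nu - 1))
      + c.K1M / (h * c.L1m)
        * (ht / (h * (2 * c.mu + c.nu - 1) * s0 ^ (2 * c.mu + c.nu - 1))
          + c.Lt1 / (c.L1m * (3 * c.mu + c.nu - 1) * s0 ^ (3 * c.mu + c.nu - 1))))

def Phi1tilG (c : Cst) (s0 h ht : ℝ) : ℝ :=
  E1tilG c s0 h ht / (c.L1m * (c.mu + c.nu - 1) * s0 ^ (c.mu + c.nu - 1))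
    + c.Lt1 / (c.L1m ^ 2 * (2 * c.mu + c.nu - 1) * s0 ^ (2 * c.mu + c.nu - 1))

def H1supG (c : Cst) (s0 h : ℝ) : ℝ :=
  c.K1M / (E1infG c s0 h * (c.mu + c.nu - 1) * s0 ^ (c.mu + c.nu - 1))

def H1tilG (c : Cst) (s0 h ht : ℝ) : ℝ :=
  (c.Kt1 + c.K1M * E1tilG c s0 h ht / E1infG c s0 h)
    / (E1infG c s0 h * (c.mu + c.nu - 1) * s0 ^ (c.mu + c.nu - 1))

def G1supG (c : Cst) (s0 h : ℝ) : ℝ :=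
  H1supG c s0 h / (c.L1m * (c.mu + c.nu - 1) * s0 ^ (c.mu + c.nu - 1))

def G1tilG (c : Cst) (s0 h ht : ℝ) : ℝ :=
  H1supG c s0 h * Phi1tilG c s0 h ht
    + H1tilG c s0 h ht / (c.L1m * (c.mu + c.nu - 1) * s0 ^ (c.mu + c.nu - 1))

/-- `ε1` as a function of the values `h` of `Hinf`, `hs` of `Hsup`, `ht` of `Htil`. -/
def eps1G (c : Cst) (s0 h hs ht : ℝ) : ℝ :=
  2 * s0 ^ c.nu * c.Q * Real.exp (-s0 ^ 2) * Phi1tilG c s0 h ht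
    + 2 * c.D1s * (2 * G1supG c s0 h * hs * ht / h ^ 4 + G1tilG c s0 h ht / h ^ 2)

def E1inf (c : Cst) (s0 r0 : ℝ) : ℝ := E1infG c s0 (Hinf c s0 r0)
def E1til (c : Cst) (s0 r0 : ℝ) : ℝ := E1tilG c s0 (Hinf c s0 r0) (Htil c s0 r0)
def Phi1til (c : Cst) (s0 r0 : ℝ) : ℝ := Phi1tilG c s0 (Hinf c s0 r0) (Htil c s0 r0)
def H1sup (c : Cst) (s0 r0 : ℝ) : ℝ := H1supG c s0 (Hinf c s0 r0)
def H1til (c : Cst) (s0 r0 : ℝ) : ℝ := H1tilG c s0 (Hinf c s0 r0) (Htil c s0 r0)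
def G1sup (c : Cst) (s0 r0 : ℝ) : ℝ := G1supG c s0 (Hinf c s0 r0)
def G1til (c : Cst) (s0 r0 : ℝ) : ℝ := G1tilG c s0 (Hinf c s0 r0) (Htil c s0 r0)
def eps1 (c : Cst) (s0 r0 : ℝ) : ℝ := eps1G c s0 (Hinf c s0 r0) (Hsup c s0 r0) (Htil c s0 r0)

/-- `j1(s0) = lim_{r0→∞} ε1(r0,s0)`: the same expression with `Hinf, Hsup, Htil`
replaced by their limits as `r0 → ∞`. -/
def j1 (c : Cst) (s0 : ℝ) : ℝ := eps1G c s0 (HinfI c s0) (HsupI c s0) (HtilI c s0)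

def E2inf (c : Cst) (s0 r0 : ℝ) : ℝ :=
  Real.exp (-(c.a * c.N2M / (c.L2m * (c.mu - 1) * r0 ^ (2 * c.mu - 2))
    + c.D2 * c.K2M / (Hinf c s0 r0 * c.L2m * (2 * c.mu + c.nu - 1) * r0 ^ (2 * c.mu + c.nu - 1))))

def E2til (c : Cst) (s0 r0 : ℝ) : ℝ :=
  2 * c.a * (c.Nt2 / (c.L2m * (c.mu - 2) * r0 ^ (c.mu - 2))
      + c.N2M * c.Lt2 / (c.L2m ^ 2 * (3 * c.mu - 2) * r0 ^ (3 * c.mu - 2)))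
    + c.D2 * (c.Kt2 / (Hinf c s0 r0 * c.L2m * (2 * c.mu + c.nu - 1) * r0 ^ (2 * c.mu + c.nu - 1))
      + c.K2M / (Hinf c s0 r0 * c.L2m)
        * (Htil c s0 r0 / (Hinf c s0 r0 * (2 * c.mu + c.nu - 1) * r0 ^ (2 * c.mu + c.nu - 1))
          + c.Lt2 / (c.L2m * (3 * c.mu + c.nu - 1) * r0 ^ (3 * c.mu + c.nu - 1))))

def Phi2til (c : Cst) (s0 r0 : ℝ) : ℝ :=
  E2til c s0 r0 / (c.L2m * (c.mu + c.nu - 1) * r0 ^ (c.mu + c.nu - 1))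
    + c.Lt2 / (c.L2m ^ 2 * (2 * c.mu + c.nu - 1) * r0 ^ (2 * c.mu + c.nu - 1))

/-- `Φ2inf(∞)(r0,s0)`. -/
def Phi2infC (c : Cst) (s0 r0 : ℝ) : ℝ :=
  E2inf c s0 r0 / (c.L2M * (c.mu + c.nu - 1) * r0 ^ (c.mu + c.nu - 1))

/-- `Φ2sup(r0)`. -/
def Phi2supC (c : Cst) (r0 : ℝ) : ℝ := 1 / (c.L2m * (c.mu + c.nu - 1) * r0 ^ (c.mu + c.nu - 1))

def H2sup (c : Cst) (s0 r0 : ℝ) : ℝ :=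
  c.K2M / (E2inf c s0 r0 * (c.mu + c.nu - 1) * r0 ^ (c.mu + c.nu - 1))

def H2til (c : Cst) (s0 r0 : ℝ) : ℝ :=
  (c.Kt2 + c.K2M * E2til c s0 r0 / E2inf c s0 r0)
    / (E2inf c s0 r0 * (c.mu + c.nu - 1) * r0 ^ (c.mu + c.nu - 1))

def G2sup (c : Cst) (s0 r0 : ℝ) : ℝ :=
  H2sup c s0 r0 / (c.L2m * (c.mu + c.nu - 1) * r0 ^ (c.mu + c.nu - 1))

def G2til (c : Cst) (s0 r0 : ℝ) : ℝ :=
  H2sup c s0 r0 * Phi2til c s0 r0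
    + H2til c s0 r0 / (c.L2m * (c.mu + c.nu - 1) * r0 ^ (c.mu + c.nu - 1))

def eps21 (c : Cst) (s0 r0 : ℝ) : ℝ := 2 * Phi2til c s0 r0 / Phi2infC c s0 r0

def eps22 (c : Cst) (s0 r0 : ℝ) : ℝ :=
  G2til c s0 r0 / Hinf c s0 r0 ^ 2
    + 2 * G2sup c s0 r0 * Hsup c s0 r0 * Htil c s0 r0 / Hinf c s0 r0 ^ 4

def eps23 (c : Cst) (s0 r0 : ℝ) : ℝ :=
  Phi2supC c r0 / Phi2infC c s0 r0 * eps22 c s0 r0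
    + G2sup c s0 r0 / Hinf c s0 r0 ^ 2 * eps21 c s0 r0

def eps2 (c : Cst) (s0 r0 : ℝ) : ℝ := eps21 c s0 r0 + eps22 c s0 r0 + eps23 c s0 r0


lemma eval_rpow (a b q : ℝ) (ha : 0 < a) (hab : a ≤ b) (hq : 0 < q) :
    ∫ v in a..b, v ^ (-(q+1)) = (a ^ (-q) - b ^ (-q)) / q := by
  have h0 : (0:ℝ) ∉ Set.uIcc a b := by
    rw [Set.uIcc_of_le hab]
    rintro ⟨h1, _⟩; linarith
  rw [integral_rpow (Or.inr ⟨by intro h; nlinarith, h0⟩)]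
  have h1 : -(q+1) + 1 = -q := by ring
  rw [h1]
  rw [div_eq_div_iff (by linarith) hq.ne']
  ring

lemma contOn_rpow (a b e : ℝ) (ha : 0 < a) :
    ContinuousOn (fun v : ℝ => v ^ e) (Set.Icc a b) := by
  apply ContinuousOn.rpow_const continuousOn_id
  intro x hx
  exact Or.inl (ne_of_gt (lt_of_lt_of_le ha hx.1))

lemma rpow_sq (x p : ℝ) (hx : 0 < x) : x ^ (-(2*p)) = (x ^ (-p))^2 := by
  rw [← Real.rpow_natCast (x ^ (-p)) 2, ← Real.rpow_mul hx.le]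
  norm_num
  rw [show -(2*p) = -(p*2) by ring]

lemma rpow_anti (x y q : ℝ) (hx : 0 < x) (hxy : x ≤ y) (hq : 0 < q) :
    y ^ (-q) ≤ x ^ (-q) :=
  Real.rpow_le_rpow_of_nonpos hx hxy (by linarith)

set_option maxHeartbeats 2000000 in
theorem stmt8 (c : Cst) (s0 r0 : ℝ) (L1 N1 K1 L2 N2 K2 : (ℝ → ℝ) → ℝ → ℝ)
    (hpos : PosC c s0 r0) (hA : Assum c s0 r0 L1 N1 K1 L2 N2 K2)
    (f1 f2 : ℝ → ℝ) (hf1 : f1 ∈ C1 s0 r0) (hf2 : f2 ∈ Mset r0) :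
    ∀ η ∈ Set.Icc s0 r0,
      c.K1m * E1inf c s0 r0 / (2 * c.L1M * (c.mu + c.nu - 1) ^ 2)
            * (s0 ^ (-(c.mu + c.nu - 1)) - η ^ (-(c.mu + c.nu - 1))) ^ 2
          ≤ G1f c s0 r0 L1 N1 K1 L2 N2 K2 f1 f2 η ∧
        G1f c s0 r0 L1 N1 K1 L2 N2 K2 f1 f2 η ≤ G1sup c s0 r0 := by
  obtain ⟨ha, hnu, hnu1, hmu, hs0, hs0r0, hD1, _, _, _, _, hL1m, hL1M, hN1m, hN1M,
    hK1m, hK1M, hL2m, hL2M, hN2m, hN2M, hK2m, hK2M, _⟩ := hpos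
  obtain ⟨hC1c, _, hB1, hB2, _, _⟩ := hA
  obtain ⟨hL1c, hN1c, hK1c⟩ := hC1c f1 hf1
  have hr0 : 0 < r0 := lt_trans hs0 hs0r0
  set p := c.mu + c.nu - 1 with hpdef
  have hp : (0:ℝ) < p := by rw [hpdef]; linarith
  have hp1 : (1:ℝ) < p := by rw [hpdef]; linarith
  have hvposI : ∀ v ∈ Set.Icc s0 r0, (0:ℝ) < v := fun v hv => lt_of_lt_of_le hs0 hv.1
  have hL1pos : ∀ v ∈ Set.Icc s0 r0, 0 < L1 f1 v := by
    intro v hv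
    have h := (hB1 f1 hf1 v hv).1
    have hv0 := hvposI v hv
    have : 0 < c.L1m * v ^ c.mu := by positivity
    linarith
  have hK1nn : ∀ v ∈ Set.Icc s0 r0, 0 ≤ K1 f1 v := by
    intro v hv
    have h := (hB1 f1 hf1 v hv).2.2.2.2.1
    have hv0 := hvposI v hv
    have : 0 < c.K1m * v ^ (-c.mu) := by positivity
    linarith
  have hN1nn : ∀ v ∈ Set.Icc s0 r0, 0 ≤ N1 f1 v := by
    intro v hv
    have h := (hB1 f1 hf1 v hv).2.2.1
    have hv0 := hvposI v hv
    have : 0 < c.N1m * v ^ (-c.mu) := by positivity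
    linarith
  have hnu_c : ContinuousOn (fun v:ℝ => v ^ c.nu) (Set.Icc s0 r0) := contOn_rpow _ _ _ hs0
  -- Hinf positivity and Hf lower bound
  have hrineq : r0 ^ (-p) < s0 ^ (-p) := Real.rpow_lt_rpow_of_neg hs0 hs0r0 (by linarith)
  have hHinfeq : Hinf c s0 r0 = c.K1m / p * (s0 ^ (-p) - r0 ^ (-p)) := by
    unfold Hinf; rw [hpdef]
  have hHinf : 0 < Hinf c s0 r0 := by
    rw [hHinfeq]
    exact mul_pos (div_pos hK1m hp) (sub_pos.mpr hrineq)
  have hHfge : Hinf c s0 r0 ≤ Hf c s0 r0 L1 N1 K1 L2 N2 K2 f1 f2 := by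
    have h2 : 0 ≤ ∫ v in Set.Ioi r0, K2 f2 v / v ^ c.nu := by
      apply setIntegral_nonneg measurableSet_Ioi
      intro v hv
      have hv0 : 0 < v := lt_trans hr0 hv
      have hK := (hB2 f2 hf2 v (Set.Ioi_subset_Ici_self hv)).2.2.2.2.1
      have hpos2 : 0 < c.K2m * v ^ (-c.mu) := by positivity
      exact div_nonneg (by linarith) (Real.rpow_nonneg hv0.le _)
    have h1 : c.K1m * ((s0 ^ (-p) - r0 ^ (-p)) / p) ≤ ∫ v in s0..r0, K1 f1 v / v ^ c.nu := by
      have hcmp : (∫ v in s0..r0, c.K1m * v ^ (-(p+1)))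
          ≤ ∫ v in s0..r0, K1 f1 v / v ^ c.nu := by
        apply intervalIntegral.integral_mono_on hs0r0.le
        · exact ContinuousOn.intervalIntegrable_of_Icc hs0r0.le
            (continuousOn_const.mul (contOn_rpow _ _ _ hs0))
        · exact ContinuousOn.intervalIntegrable_of_Icc hs0r0.le
            (hK1c.div hnu_c (fun v hv => (Real.rpow_pos_of_pos (hvposI v hv) _).ne'))
        · intro v hv
          have hv0 := hvposI v hv
          have hK := (hB1 f1 hf1 v hv).2.2.2.2.1
          have heq : c.K1m * v ^ (-(p+1)) = c.K1m * v ^ (-c.mu) / v ^ c.nu := by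
            rw [show -(p+1) = -c.mu + -c.nu by rw [hpdef]; ring,
              Real.rpow_add hv0, Real.rpow_neg hv0.le c.nu]
            ring
          rw [heq]
          exact (div_le_div_iff_of_pos_right (Real.rpow_pos_of_pos hv0 _)).mpr hK
      rwa [intervalIntegral.integral_const_mul, eval_rpow _ _ _ hs0 hs0r0.le hp] at hcmp
    have hHfeq : Hf c s0 r0 L1 N1 K1 L2 N2 K2 f1 f2
        = (∫ v in s0..r0, K1 f1 v / v ^ c.nu) + ∫ v in Set.Ioi r0, K2 f2 v / v ^ c.nu := rfl
    rw [hHfeq, hHinfeq]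
    have hrr : c.K1m / p * (s0 ^ (-p) - r0 ^ (-p))
        = c.K1m * ((s0 ^ (-p) - r0 ^ (-p)) / p) := by ring
    linarith
  set H := Hf c s0 r0 L1 N1 K1 L2 N2 K2 f1 f2 with hHset
  have hHpos : 0 < H := lt_of_lt_of_le hHinf hHfge
  -- the exponent integrand g and basic properties of E
  set g : ℝ → ℝ := fun v => 2*c.a*v*(N1 f1 v / L1 f1 v)
      + c.D1 / H * (K1 f1 v / (L1 f1 v * v ^ c.nu)) with hgset
  set E := E1f c s0 r0 L1 N1 K1 L2 N2 K2 f1 f2 with hEset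
  have hEdef : ∀ x, E x = Real.exp (-(∫ v in s0..x, g v)) := fun _ => rfl
  have hgc : ContinuousOn g (Set.Icc s0 r0) := by
    apply ContinuousOn.add
    · exact ((continuousOn_const.mul continuousOn_id).mul
        (hN1c.div hL1c (fun v hv => (hL1pos v hv).ne')))
    · exact continuousOn_const.mul (hK1c.div (hL1c.mul hnu_c)
        (fun v hv => (mul_pos (hL1pos v hv) (Real.rpow_pos_of_pos (hvposI v hv) _)).ne'))
  have hgnn : ∀ v ∈ Set.Icc s0 r0, 0 ≤ g v := by
    intro v hv
    have hv0 := hvposI v hv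
    have hL := hL1pos v hv
    apply add_nonneg
    · exact mul_nonneg (by positivity) (div_nonneg (hN1nn v hv) hL.le)
    · exact mul_nonneg (by positivity) (div_nonneg (hK1nn v hv) (by positivity))
  have hEub : ∀ x ∈ Set.Icc s0 r0, E x ≤ 1 := by
    intro x hx
    rw [hEdef, Real.exp_le_one_iff, neg_nonpos]
    exact intervalIntegral.integral_nonneg hx.1
      (fun u hu => hgnn u ⟨hu.1, le_trans hu.2 hx.2⟩)
  have hEpos : ∀ x, 0 < E x := by
    intro x; rw [hEdef]; exact Real.exp_pos _
  -- lower bound on E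
  set Ei := E1inf c s0 r0 with hEiset
  have hEidef : Ei = Real.exp (-(c.a * c.N1M / (c.L1m * (c.mu - 1) * s0 ^ (2 * c.mu - 2))
      + c.D1 * c.K1M / (Hinf c s0 r0 * c.L1m * (2 * c.mu + c.nu - 1)
        * s0 ^ (2 * c.mu + c.nu - 1)))) := rfl
  have hEipos : 0 < Ei := by rw [hEidef]; exact Real.exp_pos _
  have hElb : ∀ x ∈ Set.Icc s0 r0, Ei ≤ E x := by
    intro x hx
    have hIb : (∫ v in s0..x, g v)
        ≤ c.a * c.N1M / (c.L1m * (c.mu - 1) * s0 ^ (2 * c.mu - 2))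
          + c.D1 * c.K1M / (Hinf c s0 r0 * c.L1m * (2 * c.mu + c.nu - 1)
            * s0 ^ (2 * c.mu + c.nu - 1)) := by
      have hcmp : (∫ v in s0..x, g v)
          ≤ ∫ v in s0..x, (2*c.a*c.N1M/c.L1m * v ^ (-(2*c.mu-2+1))
              + c.D1*c.K1M/(Hinf c s0 r0 * c.L1m) * v ^ (-(2*c.mu+c.nu-1+1))) := by
        apply intervalIntegral.integral_mono_on hx.1
        · exact ContinuousOn.intervalIntegrable_of_Icc hx.1
            (hgc.mono (Set.Icc_subset_Icc_right hx.2))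
        · exact ContinuousOn.intervalIntegrable_of_Icc hx.1
            ((continuousOn_const.mul (contOn_rpow _ _ _ hs0)).add
              (continuousOn_const.mul (contOn_rpow _ _ _ hs0)))
        · intro v hv
          have hvI : v ∈ Set.Icc s0 r0 := ⟨hv.1, le_trans hv.2 hx.2⟩
          have hv0 := hvposI v hvI
          obtain ⟨hL1l, hL1u, hN1l, hN1u, hK1l, hK1u⟩ := hB1 f1 hf1 v hvI
          have hLpos := hL1pos v hvI
          have hvnu : (0:ℝ) < v ^ c.nu := Real.rpow_pos_of_pos hv0 _
          have hvm : (0:ℝ) < v ^ c.mu := Real.rpow_pos_of_pos hv0 _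
          have ht1 : 2*c.a*v*(N1 f1 v / L1 f1 v)
              ≤ 2*c.a*c.N1M/c.L1m * v ^ (-(2*c.mu-2+1)) := by
            have hdiv : N1 f1 v / L1 f1 v ≤ (c.N1M * v ^ (-c.mu)) / (c.L1m * v ^ c.mu) :=
              div_le_div₀ (by positivity) hN1u (by positivity) hL1l
            have heq : 2*c.a*c.N1M/c.L1m * v ^ (-(2*c.mu-2+1))
                = 2*c.a*v*((c.N1M * v ^ (-c.mu)) / (c.L1m * v ^ c.mu)) := by
              rw [show -(2*c.mu-2+1) = 1 + -c.mu + -c.mu by ring,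
                Real.rpow_add hv0, Real.rpow_add hv0, Real.rpow_one,
                Real.rpow_neg hv0.le c.mu]
              field_simp
            rw [heq]
            exact mul_le_mul_of_nonneg_left hdiv (by positivity)
          have ht2 : c.D1 / H * (K1 f1 v / (L1 f1 v * v ^ c.nu))
              ≤ c.D1*c.K1M/(Hinf c s0 r0 * c.L1m) * v ^ (-(2*c.mu+c.nu-1+1)) := by
            have hdiv : K1 f1 v / (L1 f1 v * v ^ c.nu)
                ≤ (c.K1M * v ^ (-c.mu)) / (c.L1m * v ^ c.mu * v ^ c.nu) :=
              div_le_div₀ (by positivity) hK1u (by positivity)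
                (mul_le_mul_of_nonneg_right hL1l hvnu.le)
            have hD : c.D1 / H ≤ c.D1 / Hinf c s0 r0 :=
              div_le_div_of_nonneg_left hD1.le hHinf hHfge
            calc c.D1 / H * (K1 f1 v / (L1 f1 v * v ^ c.nu))
                ≤ c.D1 / Hinf c s0 r0
                    * ((c.K1M * v ^ (-c.mu)) / (c.L1m * v ^ c.mu * v ^ c.nu)) := by
                  apply mul_le_mul hD hdiv
                  · exact div_nonneg (hK1nn v hvI) (by positivity)
                  · positivity
              _ = c.D1*c.K1M/(Hinf c s0 r0 * c.L1m) * v ^ (-(2*c.mu+c.nu-1+1)) := by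
                  rw [show -(2*c.mu+c.nu-1+1) = -c.mu + -c.mu + -c.nu by ring,
                    Real.rpow_add hv0, Real.rpow_add hv0,
                    Real.rpow_neg hv0.le c.mu, Real.rpow_neg hv0.le c.nu]
                  have hH0 : Hinf c s0 r0 ≠ 0 := hHinf.ne'
                  field_simp
          calc g v = 2*c.a*v*(N1 f1 v / L1 f1 v)
                + c.D1 / H * (K1 f1 v / (L1 f1 v * v ^ c.nu)) := rfl
            _ ≤ _ := add_le_add ht1 ht2
      rw [intervalIntegral.integral_add
            (f := fun v => 2*c.a*c.N1M/c.L1m * v ^ (-(2*c.mu-2+1)))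
            (g := fun v => c.D1*c.K1M/(Hinf c s0 r0 * c.L1m) * v ^ (-(2*c.mu+c.nu-1+1)))
            (ContinuousOn.intervalIntegrable_of_Icc hx.1
              (continuousOn_const.mul (contOn_rpow _ _ _ hs0)))
            (ContinuousOn.intervalIntegrable_of_Icc hx.1
              (continuousOn_const.mul (contOn_rpow _ _ _ hs0))),
          intervalIntegral.integral_const_mul, intervalIntegral.integral_const_mul,
          eval_rpow _ _ _ hs0 hx.1 (by linarith), eval_rpow _ _ _ hs0 hx.1 (by linarith)]
        at hcmp
      have hx0 : 0 < x := lt_of_lt_of_le hs0 hx.1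
      have hxa : 0 ≤ x ^ (-(2*c.mu-2)) := Real.rpow_nonneg hx0.le _
      have hxb : 0 ≤ x ^ (-(2*c.mu+c.nu-1)) := Real.rpow_nonneg hx0.le _
      have hsa : 0 < s0 ^ (2*c.mu-2) := Real.rpow_pos_of_pos hs0 _
      have hsb : 0 < s0 ^ (2*c.mu+c.nu-1) := Real.rpow_pos_of_pos hs0 _
      have hq1 : (0:ℝ) < 2*c.mu-2 := by linarith
      have hq2 : (0:ℝ) < 2*c.mu+c.nu-1 := by linarith
      have he1 : c.a * c.N1M / (c.L1m * (c.mu - 1) * s0 ^ (2 * c.mu - 2))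
          = 2*c.a*c.N1M/c.L1m * (s0 ^ (-(2*c.mu-2)) / (2*c.mu-2)) := by
        rw [Real.rpow_neg hs0.le]
        have h1 : c.mu - 1 ≠ 0 := by intro h; nlinarith
        field_simp
      have he2 : c.D1 * c.K1M / (Hinf c s0 r0 * c.L1m * (2 * c.mu + c.nu - 1)
            * s0 ^ (2 * c.mu + c.nu - 1))
          = c.D1*c.K1M/(Hinf c s0 r0 * c.L1m)
            * (s0 ^ (-(2*c.mu+c.nu-1)) / (2*c.mu+c.nu-1)) := by
        rw [Real.rpow_neg hs0.le]
        have hH0 : Hinf c s0 r0 ≠ 0 := hHinf.ne'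
        field_simp
      have hc1 : 0 ≤ 2*c.a*c.N1M/c.L1m := by positivity
      have hc2 : 0 ≤ c.D1*c.K1M/(Hinf c s0 r0 * c.L1m) := by positivity
      have hb1 : 2*c.a*c.N1M/c.L1m * ((s0 ^ (-(2*c.mu-2)) - x ^ (-(2*c.mu-2)))/(2*c.mu-2))
          ≤ 2*c.a*c.N1M/c.L1m * (s0 ^ (-(2*c.mu-2)) / (2*c.mu-2)) := by
        apply mul_le_mul_of_nonneg_left _ hc1
        exact (div_le_div_iff_of_pos_right hq1).mpr (by linarith)
      have hb2 : c.D1*c.K1M/(Hinf c s0 r0 * c.L1m)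
            * ((s0 ^ (-(2*c.mu+c.nu-1)) - x ^ (-(2*c.mu+c.nu-1)))/(2*c.mu+c.nu-1))
          ≤ c.D1*c.K1M/(Hinf c s0 r0 * c.L1m)
            * (s0 ^ (-(2*c.mu+c.nu-1)) / (2*c.mu+c.nu-1)) := by
        apply mul_le_mul_of_nonneg_left _ hc2
        exact (div_le_div_iff_of_pos_right hq2).mpr (by linarith)
      rw [he1, he2]
      linarith
    rw [hEidef, hEdef]
    exact Real.exp_le_exp.mpr (by linarith)
  -- continuity of E
  have hprim : ContinuousOn (fun x => ∫ v in s0..x, g v) (Set.Icc s0 r0) := by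
    have h := intervalIntegral.continuousOn_primitive_interval (a := s0) (b := r0)
      (μ := volume) (f := g) (by rw [Set.uIcc_of_le hs0r0.le]; exact hgc.integrableOn_Icc)
    rwa [Set.uIcc_of_le hs0r0.le] at h
  have hEc : ContinuousOn E (Set.Icc s0 r0) := by
    have hfe : E = fun x => Real.exp (-(∫ v in s0..x, g v)) := funext hEdef
    rw [hfe]
    exact Real.continuous_exp.comp_continuousOn hprim.neg
  -- the H1 function
  set H1F := H1f c s0 r0 L1 N1 K1 L2 N2 K2 f1 f2 with hH1set
  have hH1def : ∀ x, H1F x = ∫ v in s0..x, K1 f1 v / (v ^ c.nu * E v) := fun _ => rfl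
  have hkc : ContinuousOn (fun v => K1 f1 v / (v ^ c.nu * E v)) (Set.Icc s0 r0) :=
    hK1c.div (hnu_c.mul hEc)
      (fun v hv => (mul_pos (Real.rpow_pos_of_pos (hvposI v hv) _) (hEpos v)).ne')
  have hkint : ∀ x ∈ Set.Icc s0 r0,
      IntervalIntegrable (fun v => K1 f1 v / (v ^ c.nu * E v)) volume s0 x := by
    intro x hx
    exact ContinuousOn.intervalIntegrable_of_Icc hx.1
      (hkc.mono (Set.Icc_subset_Icc_right hx.2))
  have hH1lb : ∀ x ∈ Set.Icc s0 r0, c.K1m / p * (s0 ^ (-p) - x ^ (-p)) ≤ H1F x := by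
    intro x hx
    have hcmp : (∫ v in s0..x, c.K1m * v ^ (-(p+1)))
        ≤ ∫ v in s0..x, K1 f1 v / (v ^ c.nu * E v) := by
      apply intervalIntegral.integral_mono_on hx.1
      · exact ContinuousOn.intervalIntegrable_of_Icc hx.1
          (continuousOn_const.mul (contOn_rpow _ _ _ hs0))
      · exact hkint x hx
      · intro v hv
        have hvI : v ∈ Set.Icc s0 r0 := ⟨hv.1, le_trans hv.2 hx.2⟩
        have hv0 := hvposI v hvI
        have hvnu : (0:ℝ) < v ^ c.nu := Real.rpow_pos_of_pos hv0 _
        have hK := (hB1 f1 hf1 v hvI).2.2.2.2.1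
        have heq : c.K1m * v ^ (-(p+1)) = (c.K1m * v ^ (-c.mu)) / (v ^ c.nu * 1) := by
          rw [show -(p+1) = -c.mu + -c.nu by rw [hpdef]; ring,
            Real.rpow_add hv0, Real.rpow_neg hv0.le c.nu]
          field_simp
        rw [heq]
        apply div_le_div₀ (hK1nn v hvI) hK (mul_pos hvnu (hEpos v))
        exact mul_le_mul_of_nonneg_left (hEub v hvI) hvnu.le
    rw [intervalIntegral.integral_const_mul, eval_rpow _ _ _ hs0 hx.1 hp] at hcmp
    rw [hH1def]
    calc c.K1m / p * (s0 ^ (-p) - x ^ (-p))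
        = c.K1m * ((s0 ^ (-p) - x ^ (-p)) / p) := by ring
      _ ≤ _ := hcmp
  have hH1nn : ∀ x ∈ Set.Icc s0 r0, 0 ≤ H1F x := by
    intro x hx
    have h := hH1lb x hx
    have hx0 := hvposI x hx
    have hmono : x ^ (-p) ≤ s0 ^ (-p) := rpow_anti s0 x p hs0 hx.1 hp
    have hKp : 0 ≤ c.K1m / p := (div_pos hK1m hp).le
    nlinarith
  have hSdef : H1sup c s0 r0 = c.K1M / (Ei * p * s0 ^ p) := by rw [hpdef]; rfl
  have hsp : 0 < s0 ^ p := Real.rpow_pos_of_pos hs0 _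
  have hSpos : 0 < H1sup c s0 r0 := by rw [hSdef]; positivity
  have hH1ub : ∀ x ∈ Set.Icc s0 r0, H1F x ≤ H1sup c s0 r0 := by
    intro x hx
    have hcmp : (∫ v in s0..x, K1 f1 v / (v ^ c.nu * E v))
        ≤ ∫ v in s0..x, (c.K1M / Ei) * v ^ (-(p+1)) := by
      apply intervalIntegral.integral_mono_on hx.1 (hkint x hx)
      · exact ContinuousOn.intervalIntegrable_of_Icc hx.1
          (continuousOn_const.mul (contOn_rpow _ _ _ hs0))
      · intro v hv
        have hvI : v ∈ Set.Icc s0 r0 := ⟨hv.1, le_trans hv.2 hx.2⟩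
        have hv0 := hvposI v hvI
        have hvnu : (0:ℝ) < v ^ c.nu := Real.rpow_pos_of_pos hv0 _
        have hK := (hB1 f1 hf1 v hvI).2.2.2.2.2
        have heq : (c.K1M / Ei) * v ^ (-(p+1)) = (c.K1M * v ^ (-c.mu)) / (v ^ c.nu * Ei) := by
          rw [show -(p+1) = -c.mu + -c.nu by rw [hpdef]; ring,
            Real.rpow_add hv0, Real.rpow_neg hv0.le c.nu]
          field_simp
        rw [heq]
        apply div_le_div₀ (by positivity) hK (mul_pos hvnu hEipos)
        exact mul_le_mul_of_nonneg_left (hElb v hvI) hvnu.le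
    rw [intervalIntegral.integral_const_mul, eval_rpow _ _ _ hs0 hx.1 hp] at hcmp
    have hx0 := hvposI x hx
    have hxp : 0 ≤ x ^ (-p) := Real.rpow_nonneg hx0.le _
    have hfin : c.K1M / Ei * ((s0 ^ (-p) - x ^ (-p)) / p) ≤ H1sup c s0 r0 := by
      rw [hSdef, Real.rpow_neg hs0.le p]
      have heq2 : c.K1M / (Ei * p * s0 ^ p) = c.K1M / Ei * ((s0 ^ p)⁻¹ / p) := by
        field_simp
      rw [heq2]
      apply mul_le_mul_of_nonneg_left _ (by positivity)
      exact (div_le_div_iff_of_pos_right hp).mpr (by linarith)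
    rw [hH1def]
    linarith
  have hH1c : ContinuousOn H1F (Set.Icc s0 r0) := by
    have hfe : H1F = fun x => ∫ v in s0..x, K1 f1 v / (v ^ c.nu * E v) := funext hH1def
    rw [hfe]
    have h := intervalIntegral.continuousOn_primitive_interval (a := s0) (b := r0)
      (μ := volume) (f := fun v => K1 f1 v / (v ^ c.nu * E v))
      (by rw [Set.uIcc_of_le hs0r0.le]; exact hkc.integrableOn_Icc)
    rwa [Set.uIcc_of_le hs0r0.le] at h
  -- the final bounds on G1
  intro η hη
  have hη0 := hvposI η hη
  have hsub : Set.Icc s0 η ⊆ Set.Icc s0 r0 := Set.Icc_subset_Icc_right hη.2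
  have hGdef : G1f c s0 r0 L1 N1 K1 L2 N2 K2 f1 f2 η
      = ∫ v in s0..η, E v * H1F v / (L1 f1 v * v ^ c.nu) := rfl
  have hGc : ContinuousOn (fun v => E v * H1F v / (L1 f1 v * v ^ c.nu)) (Set.Icc s0 r0) :=
    (hEc.mul hH1c).div (hL1c.mul hnu_c)
      (fun v hv => (mul_pos (hL1pos v hv) (Real.rpow_pos_of_pos (hvposI v hv) _)).ne')
  have hGint : IntervalIntegrable (fun v => E v * H1F v / (L1 f1 v * v ^ c.nu)) volume s0 η :=
    ContinuousOn.intervalIntegrable_of_Icc hη.1 (hGc.mono hsub)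
  constructor
  · -- lower bound
    set Cf := Ei * c.K1m / (p * c.L1M) with hCf
    have hCfnn : 0 ≤ Cf := by rw [hCf]; positivity
    have hcmp : (∫ v in s0..η, Cf * (s0 ^ (-p) * v ^ (-(p+1)) - v ^ (-(2*p+1))))
        ≤ ∫ v in s0..η, E v * H1F v / (L1 f1 v * v ^ c.nu) := by
      apply intervalIntegral.integral_mono_on hη.1
      · apply ContinuousOn.intervalIntegrable_of_Icc hη.1
        apply continuousOn_const.mul
        exact ((continuousOn_const.mul (contOn_rpow _ _ _ hs0)).sub
          (contOn_rpow _ _ _ hs0)).mono hsub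
      · exact hGint
      · intro v hv
        have hvI : v ∈ Set.Icc s0 r0 := hsub hv
        have hv0 := hvposI v hvI
        have hvnu : (0:ℝ) < v ^ c.nu := Real.rpow_pos_of_pos hv0 _
        have hvm : (0:ℝ) < v ^ c.mu := Real.rpow_pos_of_pos hv0 _
        obtain ⟨hL1l, hL1u, hN1l, hN1u, hK1l, hK1u⟩ := hB1 f1 hf1 v hvI
        have hLpos := hL1pos v hvI
        have hmono : v ^ (-p) ≤ s0 ^ (-p) := rpow_anti s0 v p hs0 hvI.1 hp
        have hlbnn : 0 ≤ c.K1m / p * (s0 ^ (-p) - v ^ (-p)) := by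
          apply mul_nonneg (div_pos hK1m hp).le
          linarith
        have heq : Cf * (s0 ^ (-p) * v ^ (-(p+1)) - v ^ (-(2*p+1)))
            = (Ei * (c.K1m / p * (s0 ^ (-p) - v ^ (-p)))) / (c.L1M * v ^ c.mu * v ^ c.nu) := by
          rw [show -(2*p+1) = -p + -(p+1) by ring, Real.rpow_add hv0 (-p) (-(p+1)),
            show -(p+1) = -c.mu + -c.nu by rw [hpdef]; ring,
            Real.rpow_add hv0 (-c.mu) (-c.nu),
            Real.rpow_neg hv0.le c.mu, Real.rpow_neg hv0.le c.nu, hCf]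
          field_simp
        rw [heq]
        apply div_le_div₀
        · exact mul_nonneg (hEpos v).le (hH1nn v hvI)
        · exact mul_le_mul (hElb v hvI) (hH1lb v hvI) hlbnn (hEpos v).le
        · positivity
        · exact mul_le_mul_of_nonneg_right hL1u hvnu.le
    have hint1 : IntervalIntegrable (fun v : ℝ => s0 ^ (-p) * v ^ (-(p+1))) volume s0 η :=
      ContinuousOn.intervalIntegrable_of_Icc hη.1
        (continuousOn_const.mul (contOn_rpow _ _ _ hs0))
    have hint2 : IntervalIntegrable (fun v : ℝ => v ^ (-(2*p+1))) volume s0 η :=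
      ContinuousOn.intervalIntegrable_of_Icc hη.1 (contOn_rpow _ _ _ hs0)
    have hval : (∫ v in s0..η, Cf * (s0 ^ (-p) * v ^ (-(p+1)) - v ^ (-(2*p+1))))
        = Cf * (s0 ^ (-p) * ((s0 ^ (-p) - η ^ (-p)) / p)
            - (s0 ^ (-(2*p)) - η ^ (-(2*p))) / (2*p)) := by
      rw [intervalIntegral.integral_const_mul, intervalIntegral.integral_sub hint1 hint2,
        intervalIntegral.integral_const_mul, eval_rpow _ _ _ hs0 hη.1 hp,
        eval_rpow _ _ _ hs0 hη.1 (by linarith)]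
    rw [hGdef]
    refine le_trans (le_of_eq ?_) (le_trans (le_of_eq hval.symm) hcmp)
    rw [rpow_sq s0 p hs0, rpow_sq η p hη0, hCf]
    field_simp
    ring
  · -- upper bound
    have hGsup : G1sup c s0 r0 = H1sup c s0 r0 / (c.L1m * p * s0 ^ p) := by rw [hpdef]; rfl
    have hcmp : (∫ v in s0..η, E v * H1F v / (L1 f1 v * v ^ c.nu))
        ≤ ∫ v in s0..η, (H1sup c s0 r0 / c.L1m) * v ^ (-(p+1)) := by
      apply intervalIntegral.integral_mono_on hη.1 hGint
      · exact ContinuousOn.intervalIntegrable_of_Icc hη.1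
          (continuousOn_const.mul (contOn_rpow _ _ _ hs0))
      · intro v hv
        have hvI : v ∈ Set.Icc s0 r0 := hsub hv
        have hv0 := hvposI v hvI
        have hvnu : (0:ℝ) < v ^ c.nu := Real.rpow_pos_of_pos hv0 _
        have hvm : (0:ℝ) < v ^ c.mu := Real.rpow_pos_of_pos hv0 _
        obtain ⟨hL1l, hL1u, hN1l, hN1u, hK1l, hK1u⟩ := hB1 f1 hf1 v hvI
        have hLpos := hL1pos v hvI
        have heq : (H1sup c s0 r0 / c.L1m) * v ^ (-(p+1))
            = H1sup c s0 r0 / (c.L1m * v ^ c.mu * v ^ c.nu) := by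
          rw [show -(p+1) = -c.mu + -c.nu by rw [hpdef]; ring,
            Real.rpow_add hv0, Real.rpow_neg hv0.le c.mu, Real.rpow_neg hv0.le c.nu]
          field_simp
        rw [heq]
        apply div_le_div₀ hSpos.le _ (by positivity)
          (mul_le_mul_of_nonneg_right hL1l hvnu.le)
        calc E v * H1F v ≤ 1 * H1sup c s0 r0 :=
              mul_le_mul (hEub v hvI) (hH1ub v hvI) (hH1nn v hvI) zero_le_one
          _ = H1sup c s0 r0 := one_mul _
    rw [intervalIntegral.integral_const_mul, eval_rpow _ _ _ hs0 hη.1 hp] at hcmp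
    have hxp : 0 ≤ η ^ (-p) := Real.rpow_nonneg hη0.le _
    have hfin : H1sup c s0 r0 / c.L1m * ((s0 ^ (-p) - η ^ (-p)) / p) ≤ G1sup c s0 r0 := by
      rw [hGsup, Real.rpow_neg hs0.le p]
      have heq2 : H1sup c s0 r0 / (c.L1m * p * s0 ^ p)
          = H1sup c s0 r0 / c.L1m * ((s0 ^ p)⁻¹ / p) := by
        field_simp
      rw [heq2]
      apply mul_le_mul_of_nonneg_left _ (by positivity)
      exact (div_le_div_iff_of_pos_right hp).mpr (by linarith)
    rw [hGdef]
    linarith
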